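/- For any positive integers n_0, ..., n_{L+1}, the set of tuples of matrices (W^(1), ..., W^(L+1)), with W^(l) in R^{n_l x n_{l-1}}, that satisfy the generic rank conditions is open and dense in the product space prod_{l=1}^{L+1} R^{n_l x n_{l-1}}. -/

import Mathlib

namespace ReLUNet

open scoped BigOperators

/-- A tuple of weight matrices for the architecture `(n 0, ..., n (L+1))`:
the index `l : Fin (L+1)` stands for the matrix `W^(l+1) ∈ ℝ^{n (l+1) × n l}`. -/
abbrev WTuple (L : ℕ) (n : ℕ → ℕ) : Type :=
  (l : Fin (L + 1)) → (Fin (n (l.1 + 1)) → Fin (n l.1) → ℝ)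

/-- Extension of a weight tuple to all of `ℕ` (zero above the top layer). -/
noncomputable def Wext {L : ℕ} {n : ℕ → ℕ} (W : WTuple L n) (l : ℕ) :
    Matrix (Fin (n (l + 1))) (Fin (n l)) ℝ :=
  if h : l < L + 1 then Matrix.of (W ⟨l, h⟩) else 0

/-- The masked matrix product `W^(b) D_{S (b-1)} W^(b-1) ⋯ D_{S (c+1)} W^(c+1)`,
mapping layer-`c` vectors to layer-`b` vectors (in the paper's notation this is
`W^(b) D_{S_{b-1}} ⋯ D_{S_{c+1}} W^(c+1)`; for `b = c + 1` it is `W^(c+1)`). -/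
noncomputable def chainP (n : ℕ → ℕ)
    (W : ∀ l : ℕ, Matrix (Fin (n (l + 1))) (Fin (n l)) ℝ)
    (S : ∀ l : ℕ, Set (Fin (n l))) (c : ℕ) :
    (b : ℕ) → Matrix (Fin (n b)) (Fin (n c)) ℝ
  | 0 => 0
  | b + 1 =>
    if h : b = c then
      Matrix.of fun i j => W b i (finCongr (congrArg n h.symm) j)
    else
      W b * Matrix.diagonal (fun i => Set.indicator (S b) (fun _ => (1 : ℝ)) i) *
        chainP n W S c b

/-- The generic rank conditions: every masked product
`W^(b) D_{S (b-1)} ⋯ D_{S (c+1)} W^(c+1)` (for `0 ≤ c < b ≤ L + 1`) attains the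
maximal possible rank `min (n c) (min (n b) (min_{c < i < b} |S i|))`.  The
minimum is computed in `ℕ∞` so that the case `b = c + 1` (an empty collection of
selection sets) yields `min (n c) (n b)`. -/
def GenericRankCond (L : ℕ) (n : ℕ → ℕ)
    (W : ∀ l : ℕ, Matrix (Fin (n (l + 1))) (Fin (n l)) ℝ) : Prop :=
  ∀ c b : ℕ, c < b → b ≤ L + 1 → ∀ S : ∀ l : ℕ, Finset (Fin (n l)),
    ((chainP n W (fun l => ↑(S l)) c b).rank : ℕ∞) =
      min (n c : ℕ∞) (min (n b : ℕ∞)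
        ((Finset.Icc (c + 1) (b - 1)).inf fun i => ((S i).card : ℕ∞)))

open Matrix

private lemma exists_rows_li {m' n' : Type*} [Fintype m'] [Fintype n']
    (A : Matrix m' n' ℝ) (r : ℕ) (hr : r ≤ A.rank) :
    ∃ f : Fin r → m', LinearIndependent ℝ fun k => A (f k) := by
  classical
  rw [Matrix.rank_eq_finrank_span_row] at hr
  obtain ⟨b, hbsub, hbspan, hbli⟩ := exists_linearIndependent ℝ (Set.range A)
  have hfin : b.Finite := (Set.finite_range A).subset hbsub
  haveI := hfin.fintype
  have hcard : Fintype.card b = Module.finrank ℝ (Submodule.span ℝ (Set.range ((↑) : b → (n' → ℝ)))) :=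
    linearIndependent_iff_card_eq_finrank_span.mp hbli
  have hrange : Set.range ((↑) : b → (n' → ℝ)) = b := Subtype.range_coe
  have hrb : r ≤ Fintype.card b := by
    rw [hcard, hrange, hbspan]; exact hr
  obtain ⟨e⟩ : Nonempty (Fin r ↪ b) := by
    apply Function.Embedding.nonempty_of_card_le
    simpa using hrb
  have hmem : ∀ k : Fin r, ((e k : n' → ℝ)) ∈ Set.range A := fun k => hbsub (e k).2
  choose f hf using fun k => hmem k
  refine ⟨f, ?_⟩
  have : (fun k => A (f k)) = (fun x : b => (x : n' → ℝ)) ∘ e := by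
    funext k; exact hf k
  rw [this]
  exact hbli.comp e e.injective

private lemma exists_det_ne_zero {m' n' : Type*} [Fintype m'] [Fintype n']
    [DecidableEq m'] [DecidableEq n']
    (A : Matrix m' n' ℝ) (r : ℕ) (hr : r ≤ A.rank) :
    ∃ (f : Fin r → m') (g : Fin r → n'), (A.submatrix f g).det ≠ 0 := by
  classical
  obtain ⟨f, hf⟩ := exists_rows_li A r hr
  have hB : (A.submatrix f id).rank = r := by
    have h2 : LinearIndependent ℝ (A.submatrix f id) := by
      have : (A.submatrix f id) = fun k => A (f k) := by funext k j; rfl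
      rw [this]; exact hf
    exact h2.rank_matrix.trans (Fintype.card_fin r)
  have hBt : ((A.submatrix f id)ᵀ).rank = r := by
    rw [Matrix.rank_transpose]; exact hB
  obtain ⟨g, hg⟩ := exists_rows_li (A.submatrix f id)ᵀ r hBt.ge
  have hC : LinearIndependent ℝ (((A.submatrix f id)ᵀ).submatrix g id) := by
    have : ((A.submatrix f id)ᵀ).submatrix g id = fun k => (A.submatrix f id)ᵀ (g k) := by
      funext k j; rfl
    rw [this]; exact hg
  have hU : IsUnit (((A.submatrix f id)ᵀ).submatrix g id) :=
    Matrix.linearIndependent_rows_iff_isUnit.mp hC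
  have hdet : (((A.submatrix f id)ᵀ).submatrix g id).det ≠ 0 := by
    have := Matrix.isUnit_iff_isUnit_det _ |>.mp hU
    exact this.ne_zero
  refine ⟨f, g, ?_⟩
  have heq : ((A.submatrix f id)ᵀ).submatrix g id = (A.submatrix f g)ᵀ := by
    ext k k'; rfl
  rw [heq, Matrix.det_transpose] at hdet
  exact hdet

private lemma le_rank_of_det_ne_zero {m' n' : Type*} [Fintype m'] [Fintype n']
    [DecidableEq m'] [DecidableEq n'] {A : Matrix m' n' ℝ} {r : ℕ}
    {f : Fin r → m'} {g : Fin r → n'} (h : (A.submatrix f g).det ≠ 0) :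
    r ≤ A.rank := by
  classical
  have hsub : A.submatrix f g =
      (1 : Matrix m' m' ℝ).submatrix f id * (A * (1 : Matrix n' n' ℝ).submatrix id g) := by
    have h1 : A.submatrix f g = ((1 : Matrix m' m' ℝ) * A).submatrix f g := by rw [Matrix.one_mul]
    rw [h1, Matrix.submatrix_mul _ _ f id g Function.bijective_id]
    congr 1
    have h2 : A.submatrix id g = (A * (1 : Matrix n' n' ℝ)).submatrix id g := by rw [Matrix.mul_one]
    rw [h2, Matrix.submatrix_mul _ _ id id g Function.bijective_id]
    simp
  have hrk : (A.submatrix f g).rank = r := by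
    rw [Matrix.rank_of_isUnit _ ((Matrix.isUnit_iff_isUnit_det _).mpr (Ne.isUnit h))]
    simp
  calc r = (A.submatrix f g).rank := hrk.symm
    _ ≤ (A * (1 : Matrix n' n' ℝ).submatrix id g).rank := by rw [hsub]; exact Matrix.rank_mul_le_right _ _
    _ ≤ A.rank := Matrix.rank_mul_le_left _ _

private lemma le_rank_iff_sum {m' n' : Type*} [Fintype m'] [Fintype n']
    [DecidableEq m'] [DecidableEq n'] (A : Matrix m' n' ℝ) (r : ℕ) :
    r ≤ A.rank ↔
      (∑ f : Fin r → m', ∑ g : Fin r → n', ((A.submatrix f g).det) ^ 2) ≠ 0 := by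
  classical
  constructor
  · intro hr
    obtain ⟨f, g, hfg⟩ := exists_det_ne_zero A r hr
    intro hzero
    rw [Finset.sum_eq_zero_iff_of_nonneg (fun f _ => Finset.sum_nonneg fun g _ => sq_nonneg _)] at hzero
    have := hzero f (Finset.mem_univ f)
    rw [Finset.sum_eq_zero_iff_of_nonneg (fun g _ => sq_nonneg _)] at this
    exact hfg (pow_eq_zero_iff (by norm_num) |>.mp (this g (Finset.mem_univ g)))
  · intro hne
    by_contra hlt
    apply hne
    refine Finset.sum_eq_zero fun f _ => Finset.sum_eq_zero fun g _ => ?_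
    rw [pow_eq_zero_iff (n := 2) (by norm_num)]
    by_contra hdet
    exact hlt (le_rank_of_det_ne_zero hdet)




lemma chainP_succ (n : ℕ → ℕ) (W : ∀ l : ℕ, Matrix (Fin (n (l + 1))) (Fin (n l)) ℝ)
    (S : ∀ l : ℕ, Set (Fin (n l))) (c b : ℕ) :
    chainP n W S c (b + 1) =
      if h : b = c then
        Matrix.of fun i j => W b i (finCongr (congrArg n h.symm) j)
      else
        W b * Matrix.diagonal (fun i => Set.indicator (S b) (fun _ => (1 : ℝ)) i) *
          chainP n W S c b := rfl

lemma chainP_congr (n : ℕ → ℕ) (W : ∀ l : ℕ, Matrix (Fin (n (l + 1))) (Fin (n l)) ℝ)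
    {S S' : ∀ l : ℕ, Set (Fin (n l))} (c : ℕ) :
    ∀ b, c < b → (∀ l, c < l → l < b → S l = S' l) →
      chainP n W S c b = chainP n W S' c b := by
  intro b
  induction b with
  | zero => omega
  | succ b ih =>
    intro hcb h
    rw [chainP_succ, chainP_succ]
    by_cases hb : b = c
    · rw [dif_pos hb, dif_pos hb]
    · rw [dif_neg hb, dif_neg hb]
      have hcb' : c < b := by omega
      rw [h b hcb' (by omega), ih hcb' (fun l h1 h2 => h l h1 (by omega))]

lemma rank_diag_indicator {N : ℕ} (S : Finset (Fin N)) :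
    (Matrix.diagonal fun i => Set.indicator (↑S : Set (Fin N)) (fun _ => (1 : ℝ)) i).rank
      = S.card := by
  classical
  rw [Matrix.rank_diagonal]
  rw [← Fintype.card_coe S]
  apply Fintype.card_congr
  apply Equiv.subtypeEquivRight
  intro x
  by_cases hx : x ∈ S
  · simp [Set.indicator_of_mem, hx]
  · simp [Set.indicator_of_notMem, hx]

lemma chainP_rank_le_card (n : ℕ → ℕ) (W : ∀ l : ℕ, Matrix (Fin (n (l + 1))) (Fin (n l)) ℝ)
    (S : ∀ l : ℕ, Finset (Fin (n l))) (c : ℕ) :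
    ∀ b i, c < i → i < b →
      (chainP n W (fun l => (↑(S l) : Set (Fin (n l)))) c b).rank ≤ (S i).card := by
  intro b
  induction b with
  | zero => omega
  | succ b ih =>
    intro i h1 h2
    have hb : b ≠ c := by omega
    rw [chainP_succ, dif_neg hb]
    rcases Nat.lt_or_ge i b with hib | hib
    · exact le_trans (Matrix.rank_mul_le_right _ _) (ih i h1 hib)
    · have : i = b := by omega
      subst this
      refine le_trans (Matrix.rank_mul_le_left _ _) ?_
      refine le_trans (Matrix.rank_mul_le_right _ _) ?_
      exact (rank_diag_indicator (S i)).le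

noncomputable def rbound (n : ℕ → ℕ) (S : ∀ l : ℕ, Finset (Fin (n l))) (c b : ℕ) : ℕ∞ :=
  min (n c : ℕ∞) (min (n b : ℕ∞)
    ((Finset.Icc (c + 1) (b - 1)).inf fun i => ((S i).card : ℕ∞)))

lemma rbound_ne_top (n : ℕ → ℕ) (S : ∀ l : ℕ, Finset (Fin (n l))) (c b : ℕ) :
    rbound n S c b ≠ ⊤ := by
  intro h
  rw [rbound, min_eq_top] at h
  exact (ENat.coe_ne_top _) h.1

noncomputable def rtarget (n : ℕ → ℕ) (S : ∀ l : ℕ, Finset (Fin (n l))) (c b : ℕ) : ℕ :=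
  (rbound n S c b).toNat

lemma rtarget_cast (n : ℕ → ℕ) (S : ∀ l : ℕ, Finset (Fin (n l))) (c b : ℕ) :
    ((rtarget n S c b : ℕ) : ℕ∞) = rbound n S c b :=
  ENat.coe_toNat (rbound_ne_top n S c b)

lemma rtarget_le_nc (n : ℕ → ℕ) (S : ∀ l : ℕ, Finset (Fin (n l))) (c b : ℕ) :
    rtarget n S c b ≤ n c := by
  have : (rtarget n S c b : ℕ∞) ≤ (n c : ℕ∞) := by
    rw [rtarget_cast]; exact min_le_left _ _
  exact_mod_cast this

lemma rtarget_le_nb (n : ℕ → ℕ) (S : ∀ l : ℕ, Finset (Fin (n l))) (c b : ℕ) :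
    rtarget n S c b ≤ n b := by
  have : (rtarget n S c b : ℕ∞) ≤ (n b : ℕ∞) := by
    rw [rtarget_cast]; exact le_trans (min_le_right _ _) (min_le_left _ _)
  exact_mod_cast this

lemma rtarget_le_card (n : ℕ → ℕ) (S : ∀ l : ℕ, Finset (Fin (n l))) (c b : ℕ)
    {i : ℕ} (hi : i ∈ Finset.Icc (c + 1) (b - 1)) :
    rtarget n S c b ≤ (S i).card := by
  have : (rtarget n S c b : ℕ∞) ≤ ((S i).card : ℕ∞) := by
    rw [rtarget_cast]
    exact le_trans (min_le_right _ _) (le_trans (min_le_right _ _) (Finset.inf_le hi))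
  exact_mod_cast this

/-- The genericity condition at `(c, b, S)` is equivalent to the rank being at least
`rtarget`. -/
lemma cond_iff_le_rank (n : ℕ → ℕ) (W : ∀ l : ℕ, Matrix (Fin (n (l + 1))) (Fin (n l)) ℝ)
    (S : ∀ l : ℕ, Finset (Fin (n l))) {c b : ℕ} (hcb : c < b) :
    (((chainP n W (fun l => ↑(S l)) c b).rank : ℕ∞) = rbound n S c b) ↔
      rtarget n S c b ≤ (chainP n W (fun l => ↑(S l)) c b).rank := by
  constructor
  · intro h
    have : ((rtarget n S c b : ℕ) : ℕ∞) = ((chainP n W (fun l => ↑(S l)) c b).rank : ℕ∞) := by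
      rw [rtarget_cast, h]
    exact_mod_cast this.le
  · intro h
    apply le_antisymm
    · rw [rbound]
      refine le_min ?_ (le_min ?_ ?_)
      · exact_mod_cast le_trans (Matrix.rank_le_card_width _) (by simp)
      · exact_mod_cast le_trans (Matrix.rank_le_card_height _) (by simp)
      · refine Finset.le_inf fun i hi => ?_
        rw [Finset.mem_Icc] at hi
        have h1 : c < i := by omega
        have h2 : i < b := by omega
        exact_mod_cast chainP_rank_le_card n W S c b i h1 h2
    · rw [← rtarget_cast]
      exact_mod_cast h


section Witness

variable {L : ℕ} {n : ℕ → ℕ}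

private lemma exists_E (r N : ℕ) (S : Finset (Fin N)) (hgood : r ≤ N) (hS : r ≤ S.card)
    : ∃ E : Matrix (Fin N) (Fin r) ℝ,
      Eᵀ * E = 1 ∧
      (Matrix.diagonal fun i => Set.indicator (↑S : Set (Fin N)) (fun _ => (1:ℝ)) i) * E = E := by
  classical
  -- an injective map `Fin r → Fin N` with image inside `S`
  set ψ : Fin r → Fin N := fun k => S.orderEmbOfFin rfl (Fin.castLE hS k) with hψ
  have hinj : Function.Injective ψ := fun a b hab => by
    have := (S.orderEmbOfFin rfl).injective hab
    exact Fin.castLE_injective hS this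
  have hmem : ∀ k, ψ k ∈ S := fun k => by
    simpa [hψ] using S.orderEmbOfFin_mem rfl (Fin.castLE hS k)
  refine ⟨Matrix.of fun i k => if i = ψ k then 1 else 0, ?_, ?_⟩
  · ext k k'
    rw [Matrix.mul_apply]
    simp only [Matrix.transpose_apply, Matrix.of_apply]
    rw [Finset.sum_eq_single (ψ k)]
    · by_cases h : k = k'
      · subst h; simp [Matrix.one_apply]
      · have : ψ k ≠ ψ k' := fun hc => h (hinj hc)
        simp [Matrix.one_apply, this, h]
    · intro i _ hi
      simp [hi]
    · intro h; exact absurd (Finset.mem_univ _) h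
  · ext i k
    rw [Matrix.mul_apply]
    simp only [Matrix.of_apply]
    by_cases h : i = ψ k
    · subst h
      rw [Finset.sum_eq_single (ψ k)]
      · rw [Matrix.diagonal_apply_eq, Set.indicator_of_mem (Finset.mem_coe.mpr (hmem k))]
        simp
      · intro j _ hj; simp [Matrix.diagonal, hj.symm]
      · intro h; exact absurd (Finset.mem_univ _) h
    · rw [Finset.sum_eq_zero]
      · simp [h]
      · intro j _
        by_cases hji : j = i
        · subst hji; simp [h]
        · simp [Matrix.diagonal, Ne.symm hji]

private lemma exists_witness (L : ℕ) (n : ℕ → ℕ) {c b : ℕ} (hcb : c < b) (hbL : b ≤ L + 1)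
    (S : ∀ l : ℕ, Finset (Fin (n l))) (r : ℕ)
    (hrc : r ≤ n c) (hrb : r ≤ n b) (hrS : ∀ i, c < i → i < b → r ≤ (S i).card) :
    ∃ W : WTuple L n, r ≤ (chainP n (Wext W) (fun l => ↑(S l)) c b).rank := by
  classical
  have hE : ∀ l : ℕ, ∃ E : Matrix (Fin (n l)) (Fin r) ℝ,
      (c ≤ l → l ≤ b → Eᵀ * E = 1) ∧
      (c < l → l < b →
        (Matrix.diagonal fun i => Set.indicator (↑(S l) : Set (Fin (n l))) (fun _ => (1:ℝ)) i)
          * E = E) := by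
    intro l
    by_cases hl : c ≤ l ∧ l ≤ b
    · by_cases hl2 : c < l ∧ l < b
      · obtain ⟨E, h1, h2⟩ := exists_E r (n l) (S l)
          (le_trans (hrS l hl2.1 hl2.2) (le_trans (S l).card_le_univ (by simp)))
          (hrS l hl2.1 hl2.2)
        exact ⟨E, fun _ _ => h1, fun _ _ => h2⟩
      · -- l = c or l = b
        have hrl : r ≤ n l := by
          rcases (by omega : l = c ∨ l = b) with h | h <;> subst h <;> assumption
        obtain ⟨E, h1, _⟩ := exists_E r (n l) Finset.univ hrl (by simpa using hrl)
        exact ⟨E, fun _ _ => h1, fun h1' h2' => absurd ⟨h1', h2'⟩ hl2⟩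
    · exact ⟨0, fun h1 h2 => absurd ⟨h1, h2⟩ hl, fun h1 h2 => absurd ⟨le_of_lt h1, le_of_lt h2⟩ hl⟩
  choose E hE1 hE2 using hE
  set W : WTuple L n := fun l => fun i j => (E (l.1 + 1) * (E l.1)ᵀ) i j with hW
  have hWext : ∀ l, l < L + 1 → Wext W l = E (l + 1) * (E l)ᵀ := by
    intro l hl
    rw [Wext, dif_pos hl]
    ext i j
    rfl
  have key : ∀ b', c < b' → b' ≤ b →
      chainP n (Wext W) (fun l => ↑(S l)) c b' = E b' * (E c)ᵀ := by
    intro b'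
    induction b' with
    | zero => omega
    | succ b'' ih =>
      intro h1 h2
      rw [chainP_succ]
      by_cases hb : b'' = c
      · subst hb
        rw [dif_pos rfl]
        rw [hWext b'' (by omega)]
        ext i j
        simp
      · rw [dif_neg hb]
        have hc1 : c < b'' := by omega
        have hc2 : b'' ≤ b := by omega
        rw [ih hc1 hc2, hWext b'' (by omega)]
        have hD := hE2 b'' hc1 (by omega)
        have hI := hE1 b'' (by omega) hc2
        simp only [Matrix.mul_assoc]
        rw [← Matrix.mul_assoc _ (E b'') _, hD, ← Matrix.mul_assoc _ (E b'') _, hI, Matrix.one_mul]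
  refine ⟨W, ?_⟩
  rw [key b hcb le_rfl]
  have hIb := hE1 b (by omega) le_rfl
  have hIc := hE1 c le_rfl (by omega)
  have hone : (E b)ᵀ * (E b * (E c)ᵀ * E c) = 1 := by
    rw [← Matrix.mul_assoc, ← Matrix.mul_assoc, hIb, Matrix.one_mul, hIc]
  have : ((E b)ᵀ * (E b * (E c)ᵀ * E c)).rank = r := by
    rw [hone]; simp
  calc r = ((E b)ᵀ * (E b * (E c)ᵀ * E c)).rank := this.symm
    _ ≤ (E b * (E c)ᵀ * E c).rank := Matrix.rank_mul_le_right _ _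
    _ ≤ (E b * (E c)ᵀ).rank := Matrix.rank_mul_le_left _ _

end Witness


section Poly

open Polynomial

noncomputable def chainQ (n : ℕ → ℕ)
    (W : ∀ l : ℕ, Matrix (Fin (n (l + 1))) (Fin (n l)) (Polynomial ℝ))
    (S : ∀ l : ℕ, Set (Fin (n l))) (c : ℕ) :
    (b : ℕ) → Matrix (Fin (n b)) (Fin (n c)) (Polynomial ℝ)
  | 0 => 0
  | b + 1 =>
    if h : b = c then
      Matrix.of fun i j => W b i (finCongr (congrArg n h.symm) j)
    else
      W b * Matrix.diagonal (fun i => Set.indicator (S b) (fun _ => (1 : Polynomial ℝ)) i) *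
        chainQ n W S c b

lemma chainQ_succ (n : ℕ → ℕ)
    (W : ∀ l : ℕ, Matrix (Fin (n (l + 1))) (Fin (n l)) (Polynomial ℝ))
    (S : ∀ l : ℕ, Set (Fin (n l))) (c b : ℕ) :
    chainQ n W S c (b + 1) =
      if h : b = c then
        Matrix.of fun i j => W b i (finCongr (congrArg n h.symm) j)
      else
        W b * Matrix.diagonal (fun i => Set.indicator (S b) (fun _ => (1 : Polynomial ℝ)) i) *
          chainQ n W S c b := rfl

lemma chainQ_eval (n : ℕ → ℕ)
    (W : ∀ l : ℕ, Matrix (Fin (n (l + 1))) (Fin (n l)) (Polynomial ℝ))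
    (S : ∀ l : ℕ, Set (Fin (n l))) (c : ℕ) (t : ℝ) :
    ∀ b, (chainQ n W S c b).map (evalRingHom t) =
      chainP n (fun l => (W l).map (evalRingHom t)) S c b := by
  intro b
  induction b with
  | zero =>
    show ((0 : Matrix (Fin (n 0)) (Fin (n c)) (Polynomial ℝ)).map (evalRingHom t)) = 0
    ext i j
    simp
  | succ b ih =>
    rw [chainQ_succ, chainP_succ]
    by_cases hb : b = c
    · rw [dif_pos hb, dif_pos hb]
      ext i j
      rfl
    · rw [dif_neg hb, dif_neg hb]
      rw [Matrix.map_mul, Matrix.map_mul, ih]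
      classical
      have hind : (fun i => (evalRingHom t) (Set.indicator (S b) (fun _ => (1 : Polynomial ℝ)) i))
          = fun i => Set.indicator (S b) (fun _ => (1 : ℝ)) i := by
        funext i
        by_cases hi : i ∈ S b
        · simp [Set.indicator_of_mem hi]
        · simp [Set.indicator_of_notMem hi]
      rw [Matrix.diagonal_map (by simp), hind]

end Poly


section Cont

lemma continuous_Wext (L : ℕ) (n : ℕ → ℕ) (l : ℕ) :
    Continuous fun W : WTuple L n => Wext W l := by
  by_cases h : l < L + 1
  · have he : (fun W : WTuple L n => Wext W l) = fun W => Matrix.of (W ⟨l, h⟩) := by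
      funext W; rw [Wext, dif_pos h]
    rw [he]
    apply continuous_matrix
    intro i j
    exact (continuous_apply j).comp ((continuous_apply i).comp (continuous_apply _))
  · have he : (fun W : WTuple L n => Wext W l)
        = fun _ => (0 : Matrix (Fin (n (l+1))) (Fin (n l)) ℝ) := by
      funext W; rw [Wext, dif_neg h]
    rw [he]
    exact continuous_const
  
lemma continuous_chainP (L : ℕ) (n : ℕ → ℕ) (S : ∀ l : ℕ, Set (Fin (n l))) (c : ℕ) :
    ∀ b, Continuous fun W : WTuple L n => chainP n (Wext W) S c b := by
  intro b
  induction b with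
  | zero => exact continuous_const
  | succ b ih =>
    by_cases hb : b = c
    · have he : (fun W : WTuple L n => chainP n (Wext W) S c (b+1))
          = fun W => Matrix.of fun i j => Wext W b i (finCongr (congrArg n hb.symm) j) := by
        funext W; rw [chainP_succ, dif_pos hb]
      rw [he]
      apply continuous_matrix
      intro i j
      exact (continuous_Wext L n b).matrix_elem i _
    · have he : (fun W : WTuple L n => chainP n (Wext W) S c (b+1))
          = fun W => Wext W b *
              Matrix.diagonal (fun i => Set.indicator (S b) (fun _ => (1 : ℝ)) i) *
              chainP n (Wext W) S c b := by
        funext W; rw [chainP_succ, dif_neg hb]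
      rw [he]
      exact (((continuous_Wext L n b).matrix_mul continuous_const).matrix_mul ih)

noncomputable def detsum (L : ℕ) (n : ℕ → ℕ) (S : ∀ l : ℕ, Finset (Fin (n l)))
    (c b r : ℕ) : WTuple L n → ℝ := fun W =>
  ∑ f : Fin r → Fin (n b), ∑ g : Fin r → Fin (n c),
    (((chainP n (Wext W) (fun l => ↑(S l)) c b).submatrix f g).det) ^ 2

lemma continuous_detsum (L : ℕ) (n : ℕ → ℕ) (S : ∀ l : ℕ, Finset (Fin (n l))) (c b r : ℕ) :
    Continuous (detsum L n S c b r) := by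
  apply continuous_finset_sum
  intro f _
  apply continuous_finset_sum
  intro g _
  exact (((continuous_chainP L n _ c b).matrix_submatrix f g).matrix_det).pow 2

lemma mem_cond_iff (L : ℕ) (n : ℕ → ℕ) (S : ∀ l : ℕ, Finset (Fin (n l))) (c b r : ℕ)
    (W : WTuple L n) :
    r ≤ (chainP n (Wext W) (fun l => ↑(S l)) c b).rank ↔ detsum L n S c b r W ≠ 0 :=
  le_rank_iff_sum _ r

lemma isOpen_cond (L : ℕ) (n : ℕ → ℕ) (S : ∀ l : ℕ, Finset (Fin (n l))) (c b r : ℕ) :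
    IsOpen {W : WTuple L n | r ≤ (chainP n (Wext W) (fun l => ↑(S l)) c b).rank} := by
  have he : {W : WTuple L n | r ≤ (chainP n (Wext W) (fun l => ↑(S l)) c b).rank}
      = detsum L n S c b r ⁻¹' ({0}ᶜ) := by
    ext W
    simp [mem_cond_iff, Set.mem_preimage]
  rw [he]
  exact (isOpen_compl_singleton).preimage (continuous_detsum L n S c b r)

end Cont


section Dense

open Polynomial

lemma dense_cond (L : ℕ) (n : ℕ → ℕ) {c b : ℕ} (hcb : c < b) (hbL : b ≤ L + 1)
    (S : ∀ l : ℕ, Finset (Fin (n l))) (r : ℕ)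
    (hrc : r ≤ n c) (hrb : r ≤ n b) (hrS : ∀ i, c < i → i < b → r ≤ (S i).card) :
    Dense {W : WTuple L n | r ≤ (chainP n (Wext W) (fun l => ↑(S l)) c b).rank} := by
  classical
  obtain ⟨Wstar, hWstar⟩ := exists_witness L n hcb hbL S r hrc hrb hrS
  rw [Metric.dense_iff]
  intro W₀ ε hε
  set V : WTuple L n := fun l i j => Wstar l i j - W₀ l i j with hV
  set lineW : ℝ → WTuple L n := fun t => fun l i j => W₀ l i j + t * V l i j with hlineW
  set M : ∀ l : ℕ, Matrix (Fin (n (l + 1))) (Fin (n l)) (Polynomial ℝ) :=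
    fun l => Matrix.of fun i j => C (Wext W₀ l i j) + C (Wext V l i j) * X with hM
  have hMt : ∀ t : ℝ, (fun l => (M l).map (evalRingHom t)) = fun l => Wext (lineW t) l := by
    intro t
    funext l
    ext i j
    by_cases h : l < L + 1
    · simp only [hM, Matrix.map_apply, Matrix.of_apply, eval_C, eval_X,
        coe_evalRingHom, eval_add, eval_mul]
      rw [Wext, Wext, Wext, dif_pos h, dif_pos h, dif_pos h]
      show W₀ ⟨l, h⟩ i j + V ⟨l, h⟩ i j * t = (lineW t) ⟨l, h⟩ i j
      simp only [hlineW]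
      ring
    · simp only [hM, Matrix.map_apply, Matrix.of_apply, coe_evalRingHom, eval_add, eval_mul,
        eval_C, eval_X]
      rw [Wext, Wext, Wext, dif_neg h, dif_neg h, dif_neg h]
      simp
  set Q : Polynomial ℝ := ∑ f : Fin r → Fin (n b), ∑ g : Fin r → Fin (n c),
      (((chainQ n M (fun l => ↑(S l)) c b).submatrix f g).det) ^ 2 with hQ
  have hsubmap : ∀ (A : Matrix (Fin (n b)) (Fin (n c)) (Polynomial ℝ))
      (f : Fin r → Fin (n b)) (g : Fin r → Fin (n c)) (t : ℝ),
      (A.submatrix f g).map (evalRingHom t) = (A.map (evalRingHom t)).submatrix f g :=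
    fun A f g t => rfl
  have hQeval : ∀ t : ℝ, eval t Q = detsum L n S c b r (lineW t) := by
    intro t
    rw [hQ, detsum, eval_finset_sum]
    apply Finset.sum_congr rfl
    intro f _
    rw [eval_finset_sum]
    apply Finset.sum_congr rfl
    intro g _
    rw [eval_pow]
    congr 1
    rw [show eval t = ⇑(evalRingHom t) from rfl, RingHom.map_det, RingHom.mapMatrix_apply,
      hsubmap, chainQ_eval, hMt]
  have hline1 : lineW 1 = Wstar := by
    funext l i j
    simp only [hlineW, hV]
    ring
  have hQ1 : eval 1 Q ≠ 0 := by
    rw [hQeval 1, hline1]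
    exact (mem_cond_iff L n S c b r Wstar).mp hWstar
  have hQ0 : Q ≠ 0 := by
    intro h
    apply hQ1
    rw [h, eval_zero]
  have hroots := Polynomial.finite_setOf_isRoot hQ0
  set δ : ℝ := ε / (‖V‖ + 1) with hδdef
  have hVnorm : (0:ℝ) < ‖V‖ + 1 := by positivity
  have hδ : 0 < δ := div_pos hε hVnorm
  have hne : ((Set.Ioo (0:ℝ) δ) \ {x | Q.IsRoot x}).Nonempty :=
    ((Set.Ioo_infinite hδ).diff hroots).nonempty
  obtain ⟨t, ⟨ht0, htδ⟩, htr⟩ := hne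
  refine ⟨lineW t, Metric.mem_ball.mpr ?_, ?_⟩
  · have hdiff : lineW t - W₀ = t • V := by
      funext l i j
      show (lineW t) l i j - W₀ l i j = t * V l i j
      simp only [hlineW]
      ring
    rw [dist_eq_norm, hdiff, norm_smul, Real.norm_eq_abs, abs_of_pos ht0]
    have hεeq : δ * (‖V‖ + 1) = ε := div_mul_cancel₀ ε (ne_of_gt hVnorm)
    nlinarith [norm_nonneg V]
  · show r ≤ (chainP n (Wext (lineW t)) (fun l => ↑(S l)) c b).rank
    rw [mem_cond_iff]
    rw [← hQeval t]
    exact htr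
end Dense



section Main

variable (L : ℕ) (n : ℕ → ℕ)

/-- Extension of a finitely-indexed family of selection sets by `∅`. -/
noncomputable def extT (T : ∀ l : Fin (L + 2), Finset (Fin (n l.1))) :
    ∀ l : ℕ, Finset (Fin (n l)) :=
  fun l => if h : l < L + 2 then T ⟨l, h⟩ else ∅

/-- The open condition associated to an index. -/
noncomputable def Vset
    (x : Fin (L + 2) × Fin (L + 2) × (∀ l : Fin (L + 2), Finset (Fin (n l.1)))) :
    Set (WTuple L n) :=
  if x.1.1 < x.2.1.1 ∧ x.2.1.1 ≤ L + 1 then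
    {W | rtarget n (extT L n x.2.2) x.1.1 x.2.1.1 ≤
      (chainP n (Wext W) (fun l => ↑(extT L n x.2.2 l)) x.1.1 x.2.1.1).rank}
  else Set.univ

lemma extT_eq (T : ∀ l : Fin (L + 2), Finset (Fin (n l.1))) {l : ℕ} (hl : l < L + 2) :
    extT L n T l = T ⟨l, hl⟩ := dif_pos hl

lemma setEq :
    {W : WTuple L n | GenericRankCond L n (Wext W)} = ⋂ x, Vset L n x := by
  ext W
  simp only [Set.mem_setOf_eq, Set.mem_iInter]
  constructor
  · intro hW x
    rw [Vset]
    split_ifs with h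
    · exact Set.mem_setOf_eq ▸
        (cond_iff_le_rank n (Wext W) (extT L n x.2.2) h.1).mp
          (hW x.1.1 x.2.1.1 h.1 h.2 (extT L n x.2.2))
    · trivial
  · intro hW c b hcb hbL S
    set T : ∀ l : Fin (L + 2), Finset (Fin (n l.1)) := fun l => S l.1 with hT
    have hc2 : c < L + 2 := by omega
    have hb2 : b < L + 2 := by omega
    have hx := hW (⟨c, hc2⟩, ⟨b, hb2⟩, T)
    rw [Vset, if_pos ⟨hcb, hbL⟩] at hx
    have hSeq : ∀ l, c < l → l < b → extT L n T l = S l := by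
      intro l h1 h2
      rw [extT_eq L n T (show l < L + 2 by omega)]
    have hchain : chainP n (Wext W) (fun l => ↑(extT L n T l)) c b
        = chainP n (Wext W) (fun l => ↑(S l)) c b := by
      apply chainP_congr n (Wext W) c b hcb
      intro l h1 h2
      rw [hSeq l h1 h2]
    have hrbeq : rbound n (extT L n T) c b = rbound n S c b := by
      rw [rbound, rbound]
      congr 2
      apply Finset.inf_congr rfl
      intro i hi
      rw [Finset.mem_Icc] at hi
      rw [hSeq i (by omega) (by omega)]
    have hrteq : rtarget n (extT L n T) c b = rtarget n S c b := by
      rw [rtarget, rtarget, hrbeq]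
    simp only [Set.mem_setOf_eq] at hx
    rw [hchain, hrteq] at hx
    exact (cond_iff_le_rank n (Wext W) S hcb).mpr hx

end Main

/-- **Genericity is open and dense.**
For any architecture of positive widths, the set of weight tuples satisfying the
generic rank conditions is open and dense in the product space of all weight
tuples. -/
theorem genericRankCond_isOpen_and_dense (L : ℕ) (n : ℕ → ℕ)
    (hpos : ∀ i, i ≤ L + 1 → 0 < n i) :
    IsOpen {W : WTuple L n | GenericRankCond L n (Wext W)} ∧
      Dense {W : WTuple L n | GenericRankCond L n (Wext W)} := by
  rw [setEq]
  have hopen : ∀ x, IsOpen (Vset L n x) := by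
    intro x
    rw [Vset]
    split_ifs with h
    · exact isOpen_cond L n _ _ _ _
    · exact isOpen_univ
  constructor
  · exact isOpen_iInter_of_finite hopen
  · apply dense_iInter_of_isOpen hopen
    intro x
    rw [Vset]
    split_ifs with h
    · apply dense_cond L n h.1 h.2
      · exact rtarget_le_nc n _ _ _
      · exact rtarget_le_nb n _ _ _
      · intro i h1 h2
        exact rtarget_le_card n _ _ _ (Finset.mem_Icc.mpr ⟨by omega, by omega⟩)
    · exact dense_univ

end ReLUNet
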